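/- (Partial covariance identity from Remark 2) Define the residual statistics e_τ = (τ̂ − τ) − V_τx V_xx⁻¹ τ̂_x ∈ ℝ and e_w = τ̂_w − V_wx V_xx⁻¹ τ̂_x ∈ ℝ^J. Under complete randomization, Cov(e_w, e_τ) = n₁⁻¹ S_{w,Y(1)∣x} + n₀⁻¹ S_{w,Y(0)∣x}, where S_{w,Y(z)∣x} = S_{w,Y(z)} − S_{w,x} (S_x²)⁻¹ S_{x,Y(z)} is the finite-population partial covariance of w and Y(z) given x. -/

import Mathlib

open Finset Matrix

noncomputable section

/-- The set of possible complete-randomization treatment assignments: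
subsets of `{1,…,n}` of size `n₁` (the treated units). -/
def Omega (n n₁ : ℕ) : Finset (Finset (Fin n)) :=
  Finset.powersetCard n₁ Finset.univ

/-- Expectation under complete randomization (uniform over `Omega n n₁`). -/
def crE (n n₁ : ℕ) (f : Finset (Fin n) → ℝ) : ℝ :=
  (∑ s ∈ Omega n n₁, f s) / ((Omega n n₁).card : ℝ)

/-- Variance under complete randomization. -/
def crVar (n n₁ : ℕ) (f : Finset (Fin n) → ℝ) : ℝ :=
  crE n n₁ fun s => (f s - crE n n₁ f) ^ 2

/-- Covariance under complete randomization. -/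
def crCov (n n₁ : ℕ) (f g : Finset (Fin n) → ℝ) : ℝ :=
  crE n n₁ fun s => (f s - crE n n₁ f) * (g s - crE n n₁ g)

/-- Difference-in-means estimator `τ̂` of the average treatment effect. -/
def tauHat (n n₁ n₀ : ℕ) (Y1 Y0 : Fin n → ℝ) (s : Finset (Fin n)) : ℝ :=
  (n₁ : ℝ)⁻¹ * ∑ i, (if i ∈ s then Y1 i else 0)
    - (n₀ : ℝ)⁻¹ * ∑ i, (if i ∈ s then 0 else Y0 i)

/-- Difference-in-means `τ̂_w` of a covariate vector. -/
def tauHatVec (n n₁ n₀ J : ℕ) (w : Fin n → Fin J → ℝ) (s : Finset (Fin n)) :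
    Fin J → ℝ := fun j =>
  (n₁ : ℝ)⁻¹ * ∑ i, (if i ∈ s then w i j else 0)
    - (n₀ : ℝ)⁻¹ * ∑ i, (if i ∈ s then 0 else w i j)

/-- Finite-population mean. -/
def popMean (n : ℕ) (Y : Fin n → ℝ) : ℝ := (n : ℝ)⁻¹ * ∑ i, Y i

/-- Finite-population variance `S²_Y`. -/
def popVar (n : ℕ) (Y : Fin n → ℝ) : ℝ :=
  ((n : ℝ) - 1)⁻¹ * ∑ i, (Y i - popMean n Y) ^ 2

/-- Finite-population covariance `S_{w,Y}` between centered covariates and an outcome. -/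
def covVec (n J : ℕ) (w : Fin n → Fin J → ℝ) (Y : Fin n → ℝ) : Fin J → ℝ := fun j =>
  ((n : ℝ) - 1)⁻¹ * ∑ i, w i j * (Y i - popMean n Y)

/-- Finite-population covariance matrix `S_{w,x}` between two sets of centered covariates. -/
def covMat (n J K : ℕ) (w : Fin n → Fin J → ℝ) (x : Fin n → Fin K → ℝ) :
    Matrix (Fin J) (Fin K) ℝ :=
  Matrix.of fun j k => ((n : ℝ) - 1)⁻¹ * ∑ i, w i j * x i k

/-- `V_ττ = r₁⁻¹ S²_{Y(1)} + r₀⁻¹ S²_{Y(0)} − S²_τ`. -/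
def Vtt (n n₁ n₀ : ℕ) (Y1 Y0 : Fin n → ℝ) : ℝ :=
  ((n₁ : ℝ) / n)⁻¹ * popVar n Y1 + ((n₀ : ℝ) / n)⁻¹ * popVar n Y0
    - popVar n (fun i => Y1 i - Y0 i)

/-- `V_wτ = r₁⁻¹ S_{w,Y(1)} + r₀⁻¹ S_{w,Y(0)}`. -/
def VvecTau (n n₁ n₀ J : ℕ) (w : Fin n → Fin J → ℝ) (Y1 Y0 : Fin n → ℝ) :
    Fin J → ℝ :=
  ((n₁ : ℝ) / n)⁻¹ • covVec n J w Y1 + ((n₀ : ℝ) / n)⁻¹ • covVec n J w Y0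

/-- `V_wx = (r₁ r₀)⁻¹ S_{w,x}` (covariance blocks of the matrix `V`). -/
def Vmat (n n₁ n₀ J K : ℕ) (w : Fin n → Fin J → ℝ) (x : Fin n → Fin K → ℝ) :
    Matrix (Fin J) (Fin K) ℝ :=
  (((n₁ : ℝ) / n) * ((n₀ : ℝ) / n))⁻¹ • covMat n J K w x


-- ========== auxiliary lemmas ==========

lemma card_Omega (n n₁ : ℕ) : (Omega n n₁).card = n.choose n₁ := by
  simp [Omega, Finset.card_powersetCard]

lemma card_filter_mem (n n₁ : ℕ) (hn₁ : 1 ≤ n₁) (i : Fin n) :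
    ((Omega n n₁).filter (fun s => i ∈ s)).card = (n-1).choose (n₁-1) := by
  classical
  have hcard : ((Finset.univ : Finset (Fin n)).erase i).card = n - 1 := by
    simp [Finset.card_erase_of_mem]
  rw [show (n-1).choose (n₁-1) = (Finset.powersetCard (n₁-1) ((Finset.univ : Finset (Fin n)).erase i)).card by rw [Finset.card_powersetCard, hcard]]
  apply Finset.card_bij' (fun s _ => s.erase i) (fun t _ => insert i t)
  case hi =>
    intro s hs
    simp only [Finset.mem_filter, Omega, Finset.mem_powersetCard] at hs
    rw [Finset.mem_powersetCard]
    exact ⟨Finset.erase_subset_erase i hs.1.1, by rw [Finset.card_erase_of_mem hs.2, hs.1.2]⟩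
  case hj =>
    intro t ht
    rw [Finset.mem_powersetCard] at ht
    have hit : i ∉ t := fun hit => (Finset.mem_erase.mp (ht.1 hit)).1 rfl
    simp only [Finset.mem_filter, Omega, Finset.mem_powersetCard]
    refine ⟨⟨Finset.subset_univ _, ?_⟩, Finset.mem_insert_self i t⟩
    rw [Finset.card_insert_of_notMem hit, ht.2]
    omega
  case left_inv =>
    intro s hs
    simp only [Finset.mem_filter] at hs
    exact Finset.insert_erase hs.2
  case right_inv =>
    intro t ht
    rw [Finset.mem_powersetCard] at ht
    have hit : i ∉ t := fun hit => (Finset.mem_erase.mp (ht.1 hit)).1 rfl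
    exact Finset.erase_insert hit

lemma card_filter_pair (n n₁ : ℕ) (hn₁ : 2 ≤ n₁) (i j : Fin n) (hij : i ≠ j) :
    ((Omega n n₁).filter (fun s => i ∈ s ∧ j ∈ s)).card = (n-2).choose (n₁-2) := by
  classical
  have hcard : ((((Finset.univ : Finset (Fin n)).erase i)).erase j).card = n - 2 := by
    rw [Finset.card_erase_of_mem, Finset.card_erase_of_mem] <;>
      simp [Finset.mem_erase, hij.symm]
    omega
  rw [show (n-2).choose (n₁-2) = (Finset.powersetCard (n₁-2)
      ((((Finset.univ : Finset (Fin n)).erase i)).erase j)).card by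
    rw [Finset.card_powersetCard, hcard]]
  apply Finset.card_bij' (fun s _ => (s.erase i).erase j)
    (fun t _ => insert i (insert j t))
  case hi =>
    intro s hs
    simp only [Finset.mem_filter, Omega, Finset.mem_powersetCard] at hs
    rw [Finset.mem_powersetCard]
    constructor
    · intro a ha
      simp only [Finset.mem_erase] at ha ⊢
      exact ⟨ha.1, ha.2.1, Finset.mem_univ a⟩
    · rw [Finset.card_erase_of_mem (Finset.mem_erase.mpr ⟨hij.symm, hs.2.2⟩),
        Finset.card_erase_of_mem hs.2.1, hs.1.2]
      omega
  case hj =>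
    intro t ht
    rw [Finset.mem_powersetCard] at ht
    have hit : i ∉ t := fun h => by
      have := ht.1 h; simp [Finset.mem_erase] at this
    have hjt : j ∉ t := fun h => by
      have := ht.1 h; simp [Finset.mem_erase] at this
    simp only [Finset.mem_filter, Omega, Finset.mem_powersetCard]
    refine ⟨⟨Finset.subset_univ _, ?_⟩, Finset.mem_insert_self i _,
      Finset.mem_insert_of_mem (Finset.mem_insert_self j t)⟩
    rw [Finset.card_insert_of_notMem (by simp [Finset.mem_insert, hij, hit]),
      Finset.card_insert_of_notMem hjt, ht.2]
    omega
  case left_inv =>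
    intro s hs
    simp only [Finset.mem_filter] at hs
    rw [Finset.insert_erase (Finset.mem_erase.mpr ⟨hij.symm, hs.2.2⟩),
      Finset.insert_erase hs.2.1]
  case right_inv =>
    intro t ht
    rw [Finset.mem_powersetCard] at ht
    have hit : i ∉ t := fun h => by
      have := ht.1 h; simp [Finset.mem_erase] at this
    have hjt : j ∉ t := fun h => by
      have := ht.1 h; simp [Finset.mem_erase] at this
    rw [Finset.erase_insert (by simp [Finset.mem_insert, hij, hit]),
      Finset.erase_insert hjt]

lemma card_filter_pair_real (n n₁ : ℕ) (hn : 2 ≤ n) (hn₁ : 1 ≤ n₁) (hle : n₁ ≤ n)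
    (i j : Fin n) (hij : i ≠ j) :
    (((Omega n n₁).filter (fun s => i ∈ s ∧ j ∈ s)).card : ℝ) * ((n:ℝ) - 1)
      = (((n-1).choose (n₁-1) : ℕ) : ℝ) * ((n₁:ℝ) - 1) := by
  rcases eq_or_lt_of_le hn₁ with h1 | h2
  · have hempty : ((Omega n n₁).filter (fun s => i ∈ s ∧ j ∈ s)) = ∅ := by
      rw [Finset.filter_eq_empty_iff]
      intro s hs
      simp only [Omega, Finset.mem_powersetCard] at hs
      rintro ⟨hi, hj⟩
      have : ({i, j} : Finset (Fin n)) ⊆ s := by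
        intro a ha; simp only [Finset.mem_insert, Finset.mem_singleton] at ha
        rcases ha with rfl | rfl <;> assumption
      have := Finset.card_le_card this
      rw [Finset.card_pair hij, hs.2] at this
      omega
    rw [hempty]
    simp [← h1]
  · rw [card_filter_pair n n₁ h2 i j hij]
    have hnat : (n - 1) * (n-2).choose (n₁-2) = (n-1).choose (n₁-1) * (n₁ - 1) := by
      have := Nat.add_one_mul_choose_eq (n-2) (n₁-2)
      have e1 : n-2+1 = n - 1 := by omega
      have e2 : n₁-2+1 = n₁ - 1 := by omega
      rw [e1, e2] at this
      exact this
    have : ((n - 1 : ℕ) : ℝ) * ((n-2).choose (n₁-2) : ℝ)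
        = ((n-1).choose (n₁-1) : ℝ) * ((n₁ - 1 : ℕ) : ℝ) := by
      exact_mod_cast congrArg (Nat.cast : ℕ → ℝ) hnat
    rw [Nat.cast_sub (by omega), Nat.cast_sub (by omega)] at this
    push_cast at this ⊢
    linarith [this]

lemma crCov_eq (n n₁ : ℕ) (f g : Finset (Fin n) → ℝ)
    (hN : ((Omega n n₁).card : ℝ) ≠ 0) :
    crCov n n₁ f g = crE n n₁ (fun s => f s * g s) - crE n n₁ f * crE n n₁ g := by
  unfold crCov crE
  have h : ∀ s ∈ Omega n n₁,
      (f s - (∑ t ∈ Omega n n₁, f t) / ((Omega n n₁).card : ℝ)) *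
      (g s - (∑ t ∈ Omega n n₁, g t) / ((Omega n n₁).card : ℝ))
      = f s * g s
        - (∑ t ∈ Omega n n₁, f t) / ((Omega n n₁).card : ℝ) * g s
        - (∑ t ∈ Omega n n₁, g t) / ((Omega n n₁).card : ℝ) * f s
        + (∑ t ∈ Omega n n₁, f t) / ((Omega n n₁).card : ℝ)
          * ((∑ t ∈ Omega n n₁, g t) / ((Omega n n₁).card : ℝ)) := fun s _ => by ring
  rw [Finset.sum_congr rfl h]
  rw [Finset.sum_add_distrib, Finset.sum_sub_distrib, Finset.sum_sub_distrib,
      ← Finset.mul_sum, ← Finset.mul_sum, Finset.sum_const, nsmul_eq_mul]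
  field_simp
  ring

lemma crCov_const_right (n n₁ : ℕ) (f g : Finset (Fin n) → ℝ) (κ : ℝ)
    (hN : ((Omega n n₁).card : ℝ) ≠ 0) :
    crCov n n₁ f (fun s => κ + g s) = crCov n n₁ f g := by
  have hE : crE n n₁ (fun s => κ + g s) = κ + crE n n₁ g := by
    unfold crE
    rw [Finset.sum_add_distrib, Finset.sum_const, nsmul_eq_mul, add_div,
      mul_div_assoc]
    field_simp
  unfold crCov
  rw [hE]
  congr 1
  funext s
  ring

lemma sum_T (n n₁ : ℕ) (hn₁ : 1 ≤ n₁) (u : Fin n → ℝ)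
    (hA : ∀ i : Fin n, ((Omega n n₁).filter (fun s => i ∈ s)).card = (n-1).choose (n₁-1)) :
    ∑ s ∈ Omega n n₁, (∑ i, if i ∈ s then u i else 0)
      = ((n-1).choose (n₁-1) : ℝ) * ∑ i, u i := by
  rw [Finset.sum_comm, Finset.mul_sum]
  refine Finset.sum_congr rfl fun i _ => ?_
  rw [← Finset.sum_filter, Finset.sum_const, nsmul_eq_mul, hA i]

lemma sum_TT (n n₁ : ℕ) (hn : 2 ≤ n) (hn₁ : 1 ≤ n₁) (hle : n₁ ≤ n)
    (u v : Fin n → ℝ)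
    (hA : ∀ i : Fin n, (((Omega n n₁).filter (fun s => i ∈ s)).card : ℝ) = ((n-1).choose (n₁-1) : ℕ))
    (hP : ∀ i j : Fin n, i ≠ j →
      (((Omega n n₁).filter (fun s => i ∈ s ∧ j ∈ s)).card : ℝ) * ((n:ℝ) - 1)
        = (((n-1).choose (n₁-1) : ℕ) : ℝ) * ((n₁:ℝ) - 1)) :
    ((n:ℝ) - 1) * ∑ s ∈ Omega n n₁,
        ((∑ i, if i ∈ s then u i else 0) * (∑ i, if i ∈ s then v i else 0))
      = (((n-1).choose (n₁-1) : ℕ) : ℝ) *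
          (((n:ℝ) - (n₁:ℝ)) * (∑ i, u i * v i)
            + ((n₁:ℝ) - 1) * ((∑ i, u i) * (∑ i, v i))) := by
  have step1 : ∀ s ∈ Omega n n₁,
      (∑ i, if i ∈ s then u i else 0) * (∑ i, if i ∈ s then v i else 0)
      = ∑ i, ∑ j, if i ∈ s ∧ j ∈ s then u i * v j else 0 := by
    intro s _
    rw [Finset.sum_mul]
    refine Finset.sum_congr rfl fun i _ => ?_
    rw [Finset.mul_sum]
    refine Finset.sum_congr rfl fun j _ => ?_
    split_ifs with h1 h2 h3 <;> simp_all
  rw [Finset.sum_congr rfl step1, Finset.sum_comm]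
  have step2 : ∀ i : Fin n,
      ∑ s ∈ Omega n n₁, ∑ j, (if i ∈ s ∧ j ∈ s then u i * v j else 0)
      = ∑ j, (((Omega n n₁).filter (fun s => i ∈ s ∧ j ∈ s)).card : ℝ) * (u i * v j) := by
    intro i
    rw [Finset.sum_comm]
    refine Finset.sum_congr rfl fun j _ => ?_
    rw [← Finset.sum_filter, Finset.sum_const, nsmul_eq_mul]
  rw [Finset.sum_congr rfl (fun i _ => step2 i)]
  rw [Finset.mul_sum]
  have step3 : ∀ i : Fin n,
      ((n:ℝ) - 1) * ∑ j, (((Omega n n₁).filter (fun s => i ∈ s ∧ j ∈ s)).card : ℝ) * (u i * v j)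
      = (((n-1).choose (n₁-1) : ℕ) : ℝ) *
          (((n:ℝ) - (n₁:ℝ)) * (u i * v i) + ((n₁:ℝ) - 1) * (u i * ∑ j, v j)) := by
    intro i
    rw [Finset.mul_sum]
    rw [← Finset.add_sum_erase _ _ (Finset.mem_univ i)]
    have hdiag : ((Omega n n₁).filter (fun s => i ∈ s ∧ i ∈ s)) =
        ((Omega n n₁).filter (fun s => i ∈ s)) := by
      simp
    have hsum_off : ∑ j ∈ Finset.univ.erase i,
        ((n:ℝ) - 1) * ((((Omega n n₁).filter (fun s => i ∈ s ∧ j ∈ s)).card : ℝ) * (u i * v j))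
        = ∑ j ∈ Finset.univ.erase i,
          ((((n-1).choose (n₁-1) : ℕ) : ℝ) * ((n₁:ℝ) - 1)) * (u i * v j) := by
      refine Finset.sum_congr rfl fun j hj => ?_
      have hij : i ≠ j := fun h => (Finset.mem_erase.mp hj).1 h.symm
      rw [← hP i j hij]
      ring
    rw [hsum_off, hdiag, hA i, ← Finset.mul_sum, ← Finset.mul_sum]
    have : ∑ j ∈ Finset.univ.erase i, v j = (∑ j, v j) - v i := by
      rw [← Finset.add_sum_erase _ v (Finset.mem_univ i)]
      ring
    rw [this]
    ring
  rw [Finset.sum_congr rfl (fun i _ => step3 i)]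
  rw [← Finset.mul_sum, Finset.sum_add_distrib, ← Finset.mul_sum, ← Finset.mul_sum,
    ← Finset.sum_mul]

lemma key_cov (n n₁ n₀ : ℕ) (hn : 2 ≤ n) (hn₁ : 1 ≤ n₁) (hn₀ : 1 ≤ n₀)
    (hsum : n₁ + n₀ = n) (u v : Fin n → ℝ) (hu : ∑ i, u i = 0) :
    crCov n n₁ (fun s => ∑ i, if i ∈ s then u i else 0)
               (fun s => ∑ i, if i ∈ s then v i else 0)
      = (n₁ : ℝ) * (n₀ : ℝ) / ((n : ℝ) * ((n:ℝ) - 1)) * ∑ i, u i * v i := by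
  have hle : n₁ ≤ n := by omega
  have hNnat : 0 < n.choose n₁ := Nat.choose_pos hle
  have hN : ((Omega n n₁).card : ℝ) ≠ 0 := by
    rw [card_Omega]; positivity
  have hA : ∀ i : Fin n, (((Omega n n₁).filter (fun s => i ∈ s)).card : ℝ)
      = (((n-1).choose (n₁-1) : ℕ) : ℝ) := fun i => by
    rw [card_filter_mem n n₁ hn₁ i]
  have hP := fun i j hij => card_filter_pair_real n n₁ hn hn₁ hle i j hij
  have hEu : crE n n₁ (fun s => ∑ i, if i ∈ s then u i else 0) = 0 := by
    unfold crE
    rw [sum_T n n₁ hn₁ u (fun i => card_filter_mem n n₁ hn₁ i), hu, mul_zero, zero_div]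
  rw [crCov_eq n n₁ _ _ hN, hEu, zero_mul, sub_zero]
  unfold crE
  have hmain := sum_TT n n₁ hn hn₁ hle u v hA hP
  rw [hu] at hmain
  ring_nf at hmain
  have hratio : (n : ℝ) * (((n-1).choose (n₁-1) : ℕ) : ℝ) = ((Omega n n₁).card : ℝ) * (n₁ : ℝ) := by
    rw [card_Omega]
    have := Nat.add_one_mul_choose_eq (n-1) (n₁-1)
    have e1 : n-1+1 = n := by omega
    have e2 : n₁-1+1 = n₁ := by omega
    rw [e1, e2] at this
    exact_mod_cast congrArg (Nat.cast : ℕ → ℝ) this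
  have hn1 : (n:ℝ) - 1 ≠ 0 := by
    have : (2:ℝ) ≤ (n:ℝ) := by exact_mod_cast hn
    linarith
  have hnne : (n:ℝ) ≠ 0 := by positivity
  have hcast : (n : ℝ) - (n₁ : ℝ) = (n₀ : ℝ) := by
    have : (n₁ : ℝ) + (n₀ : ℝ) = (n : ℝ) := by exact_mod_cast hsum
    linarith
  rw [div_eq_iff hN, div_mul_eq_mul_div, div_mul_eq_mul_div, eq_div_iff (by
    intro h; exact hn1 (by
      rcases mul_eq_zero.mp h with h' | h'
      · exact absurd h' hnne
      · exact h'))]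
  linear_combination (n : ℝ) * hmain + (((n:ℝ) - (n₁:ℝ)) * ∑ i, u i * v i) * hratio
    + ((Omega n n₁).card : ℝ) * (n₁:ℝ) * (∑ i, u i * v i) * hcast

lemma ite_not_sum {n : ℕ} (s : Finset (Fin n)) (f : Fin n → ℝ) :
    ∑ i, (if i ∈ s then (0:ℝ) else f i) = (∑ i, f i) - ∑ i, (if i ∈ s then f i else 0) := by
  rw [← Finset.sum_sub_distrib]
  refine Finset.sum_congr rfl fun i _ => ?_
  split_ifs <;> ring

lemma tauHatVec_canon (n n₁ n₀ J : ℕ) (w : Fin n → Fin J → ℝ)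
    (hw : ∀ j, ∑ i, w i j = 0) (s : Finset (Fin n)) (j : Fin J) :
    tauHatVec n n₁ n₀ J w s j
      = ∑ i, if i ∈ s then ((n₁:ℝ)⁻¹ + (n₀:ℝ)⁻¹) * w i j else 0 := by
  unfold tauHatVec
  rw [ite_not_sum, hw j]
  have : ∀ i : Fin n, (if i ∈ s then ((n₁:ℝ)⁻¹ + (n₀:ℝ)⁻¹) * w i j else 0)
      = ((n₁:ℝ)⁻¹ + (n₀:ℝ)⁻¹) * (if i ∈ s then w i j else 0) := fun i => by
    split_ifs <;> ring
  rw [Finset.sum_congr rfl fun i _ => this i, ← Finset.mul_sum]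
  ring

lemma tauHat_canon (n n₁ n₀ : ℕ) (Y1 Y0 : Fin n → ℝ) (s : Finset (Fin n)) :
    tauHat n n₁ n₀ Y1 Y0 s
      = (-(n₀:ℝ)⁻¹ * ∑ i, Y0 i)
        + ∑ i, if i ∈ s then (n₁:ℝ)⁻¹ * Y1 i + (n₀:ℝ)⁻¹ * Y0 i else 0 := by
  unfold tauHat
  rw [ite_not_sum]
  have : ∀ i : Fin n, (if i ∈ s then (n₁:ℝ)⁻¹ * Y1 i + (n₀:ℝ)⁻¹ * Y0 i else 0)
      = (n₁:ℝ)⁻¹ * (if i ∈ s then Y1 i else 0)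
        + (n₀:ℝ)⁻¹ * (if i ∈ s then Y0 i else 0) := fun i => by
    split_ifs <;> ring
  rw [Finset.sum_congr rfl fun i _ => this i, Finset.sum_add_distrib,
    ← Finset.mul_sum, ← Finset.mul_sum]
  ring

lemma mulVec_tauHatVec (n n₁ n₀ J K : ℕ) (M : Matrix (Fin J) (Fin K) ℝ)
    (x : Fin n → Fin K → ℝ) (hx : ∀ k, ∑ i, x i k = 0) (s : Finset (Fin n)) (j : Fin J) :
    (M *ᵥ tauHatVec n n₁ n₀ K x s) j
      = ∑ i, if i ∈ s then ((n₁:ℝ)⁻¹ + (n₀:ℝ)⁻¹) * ∑ k, M j k * x i k else 0 := by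
  have h1 : (M *ᵥ tauHatVec n n₁ n₀ K x s) j
      = ∑ k, M j k * ∑ i, (if i ∈ s then ((n₁:ℝ)⁻¹ + (n₀:ℝ)⁻¹) * x i k else 0) := by
    simp only [Matrix.mulVec, dotProduct]
    exact Finset.sum_congr rfl fun k _ => by rw [tauHatVec_canon n n₁ n₀ K x hx s k]
  rw [h1]
  have h2 : ∀ k : Fin K, M j k * ∑ i, (if i ∈ s then ((n₁:ℝ)⁻¹ + (n₀:ℝ)⁻¹) * x i k else 0)
      = ∑ i, (if i ∈ s then M j k * (((n₁:ℝ)⁻¹ + (n₀:ℝ)⁻¹) * x i k) else 0) := by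
    intro k
    rw [Finset.mul_sum]
    refine Finset.sum_congr rfl fun i _ => ?_
    split_ifs <;> ring
  rw [Finset.sum_congr rfl fun k _ => h2 k, Finset.sum_comm]
  refine Finset.sum_congr rfl fun i _ => ?_
  split_ifs with h
  · rw [Finset.mul_sum]
    refine Finset.sum_congr rfl fun k _ => by ring
  · exact Finset.sum_const_zero

lemma dot_tauHatVec (n n₁ n₀ K : ℕ) (a : Fin K → ℝ)
    (x : Fin n → Fin K → ℝ) (hx : ∀ k, ∑ i, x i k = 0) (s : Finset (Fin n)) :
    a ⬝ᵥ tauHatVec n n₁ n₀ K x s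
      = ∑ i, if i ∈ s then ((n₁:ℝ)⁻¹ + (n₀:ℝ)⁻¹) * ∑ k, a k * x i k else 0 := by
  have := mulVec_tauHatVec n n₁ n₀ 1 K (Matrix.of fun _ k => a k) x hx s 0
  simpa [Matrix.mulVec, dotProduct] using this

lemma Vmat_mul_inv (n n₁ n₀ J K : ℕ) (hn : 1 ≤ n) (hn₁ : 1 ≤ n₁) (hn₀ : 1 ≤ n₀)
    (w : Fin n → Fin J → ℝ) (x : Fin n → Fin K → ℝ)
    (hSx : IsUnit (covMat n K K x x).det) :
    Vmat n n₁ n₀ J K w x * (Vmat n n₁ n₀ K K x x)⁻¹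
      = covMat n J K w x * (covMat n K K x x)⁻¹ := by
  have hpq : (((n₁ : ℝ) / n) * ((n₀ : ℝ) / n)) ≠ 0 := by
    have h1 : (n₁:ℝ) ≠ 0 := Nat.cast_ne_zero.mpr (by omega)
    have h2 : (n₀:ℝ) ≠ 0 := Nat.cast_ne_zero.mpr (by omega)
    have h3 : (n:ℝ) ≠ 0 := Nat.cast_ne_zero.mpr (by omega)
    exact mul_ne_zero (div_ne_zero h1 h3) (div_ne_zero h2 h3)
  unfold Vmat
  set e : ℝ := (((n₁ : ℝ) / n) * ((n₀ : ℝ) / n)) with he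
  have hinv : e⁻¹ ≠ 0 := inv_ne_zero hpq
  haveI := invertibleOfNonzero hinv
  rw [Matrix.inv_smul (A := covMat n K K x x) e⁻¹ hSx, invOf_eq_inv e⁻¹]
  rw [Matrix.smul_mul, Matrix.mul_smul, smul_smul, inv_inv, inv_mul_cancel₀ hpq, one_smul]

lemma swap_helper {n K : ℕ} (f : Fin n → ℝ) (g : Fin n → Fin K → ℝ) (b : Fin K → ℝ) :
    ∑ i, f i * ∑ k, b k * g i k = ∑ k, b k * ∑ i, f i * g i k := by
  have h : ∀ i : Fin n, f i * ∑ k, b k * g i k = ∑ k, b k * (f i * g i k) := by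
    intro i; rw [Finset.mul_sum]; exact Finset.sum_congr rfl fun k _ => by ring
  rw [Finset.sum_congr rfl fun i _ => h i, Finset.sum_comm]
  exact Finset.sum_congr rfl fun k _ => by rw [Finset.mul_sum]

lemma moment_vec {n J : ℕ} (hn : 2 ≤ n) (w : Fin n → Fin J → ℝ) (Y : Fin n → ℝ)
    (j : Fin J) (hwj : ∑ i, w i j = 0) :
    ∑ i, w i j * Y i = ((n:ℝ) - 1) * covVec n J w Y j := by
  have hn1 : (n:ℝ) - 1 ≠ 0 := by
    have : (2:ℝ) ≤ (n:ℝ) := by exact_mod_cast hn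
    linarith
  unfold covVec
  rw [← mul_assoc, mul_inv_cancel₀ hn1, one_mul]
  rw [show ∑ i, w i j * (Y i - popMean n Y)
      = ∑ i, w i j * Y i - popMean n Y * ∑ i, w i j by
    rw [Finset.mul_sum, ← Finset.sum_sub_distrib]
    exact Finset.sum_congr rfl fun i _ => by ring]
  rw [hwj, mul_zero, sub_zero]

lemma moment_mat {n J K : ℕ} (hn : 2 ≤ n) (w : Fin n → Fin J → ℝ)
    (x : Fin n → Fin K → ℝ) (j : Fin J) (k : Fin K) :
    ∑ i, w i j * x i k = ((n:ℝ) - 1) * covMat n J K w x j k := by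
  have hn1 : (n:ℝ) - 1 ≠ 0 := by
    have : (2:ℝ) ≤ (n:ℝ) := by exact_mod_cast hn
    linarith
  unfold covMat
  rw [Matrix.of_apply, ← mul_assoc, mul_inv_cancel₀ hn1, one_mul]


lemma final_alg (n n₁ n₀ J K : ℕ) (hn : 2 ≤ n) (hn₁ : 1 ≤ n₁) (hn₀ : 1 ≤ n₀)
    (hsum : n₁ + n₀ = n) (Y1 Y0 : Fin n → ℝ) (w : Fin n → Fin J → ℝ)
    (x : Fin n → Fin K → ℝ) (hw : ∀ j, ∑ i, w i j = 0) (hx : ∀ k, ∑ i, x i k = 0)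
    (hSx : IsUnit (covMat n K K x x).det) (j : Fin J) (a : Fin K → ℝ) :
    (n₁ : ℝ) * (n₀ : ℝ) / ((n : ℝ) * ((n:ℝ) - 1)) *
      ∑ i, ((((n₁:ℝ)⁻¹ + (n₀:ℝ)⁻¹) *
          (w i j - ∑ k, (Vmat n n₁ n₀ J K w x * (Vmat n n₁ n₀ K K x x)⁻¹) j k * x i k))
        * ((n₁:ℝ)⁻¹ * Y1 i + (n₀:ℝ)⁻¹ * Y0 i - ((n₁:ℝ)⁻¹ + (n₀:ℝ)⁻¹) * ∑ k, a k * x i k))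
    = (n₁ : ℝ)⁻¹ * (covVec n J w Y1 j -
          (covMat n J K w x *ᵥ ((covMat n K K x x)⁻¹ *ᵥ covVec n K x Y1)) j)
      + (n₀ : ℝ)⁻¹ * (covVec n J w Y0 j -
          (covMat n J K w x *ᵥ ((covMat n K K x x)⁻¹ *ᵥ covVec n K x Y0)) j) := by
  have hMe : Vmat n n₁ n₀ J K w x * (Vmat n n₁ n₀ K K x x)⁻¹
      = covMat n J K w x * (covMat n K K x x)⁻¹ :=
    Vmat_mul_inv n n₁ n₀ J K (by omega) hn₁ hn₀ w x hSx
  rw [hMe]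
  set p : ℝ := (n₁:ℝ)⁻¹ with hp
  set q : ℝ := (n₀:ℝ)⁻¹ with hq
  set c : ℝ := p + q with hcdef
  set nn : ℝ := (n:ℝ) - 1 with hnn
  set M : Matrix (Fin J) (Fin K) ℝ := covMat n J K w x * (covMat n K K x x)⁻¹ with hMdef
  set V : Fin n → ℝ := fun i => p * Y1 i + q * Y0 i - c * ∑ k, a k * x i k with hV
  have expandV : ∀ f : Fin n → ℝ, ∑ i, f i * V i
      = p * ∑ i, f i * Y1 i + q * ∑ i, f i * Y0 i
        - c * ∑ k, a k * ∑ i, f i * x i k := by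
    intro f
    have e : ∀ i ∈ Finset.univ, f i * V i
        = (p * (f i * Y1 i) + q * (f i * Y0 i)) - c * (f i * ∑ k, a k * x i k) :=
      fun i _ => by rw [hV]; ring
    rw [Finset.sum_congr rfl e, Finset.sum_sub_distrib, Finset.sum_add_distrib,
      ← Finset.mul_sum, ← Finset.mul_sum, ← Finset.mul_sum, swap_helper f x a]
  have hUVexp : ∑ i, ((c * (w i j - ∑ k, M j k * x i k)) * V i)
      = c * (∑ i, w i j * V i) - c * ∑ k, M j k * ∑ i, x i k * V i := by
    have e : ∀ i ∈ Finset.univ, (c * (w i j - ∑ k, M j k * x i k)) * V i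
        = c * (w i j * V i) - c * (V i * ∑ k, M j k * x i k) := fun i _ => by ring
    rw [Finset.sum_congr rfl e, Finset.sum_sub_distrib, ← Finset.mul_sum, ← Finset.mul_sum,
      swap_helper V x (fun k => M j k)]
    have e2 : ∀ k ∈ Finset.univ, M j k * ∑ i, V i * x i k
        = M j k * ∑ i, x i k * V i := fun k _ => by
      rw [Finset.sum_congr rfl (fun i _ => mul_comm (V i) (x i k))]
    rw [Finset.sum_congr rfl e2]
  have hW : ∑ i, w i j * V i
      = nn * (p * covVec n J w Y1 j + q * covVec n J w Y0 j
          - c * ∑ k, a k * covMat n J K w x j k) := by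
    rw [expandV (fun i => w i j), moment_vec hn w Y1 j (hw j), moment_vec hn w Y0 j (hw j)]
    have e : ∀ k ∈ Finset.univ, a k * ∑ i, w i j * x i k
        = nn * (a k * covMat n J K w x j k) := fun k _ => by
      rw [moment_mat hn w x j k]; ring
    rw [Finset.sum_congr rfl e, ← Finset.mul_sum]
    ring
  have hX : ∀ k : Fin K, ∑ i, x i k * V i
      = nn * (p * covVec n K x Y1 k + q * covVec n K x Y0 k
          - c * ∑ m, a m * covMat n K K x x k m) := by
    intro k
    rw [expandV (fun i => x i k), moment_vec hn x Y1 k (hx k), moment_vec hn x Y0 k (hx k)]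
    have e : ∀ m ∈ Finset.univ, a m * ∑ i, x i k * x i m
        = nn * (a m * covMat n K K x x k m) := fun m _ => by
      rw [moment_mat hn x x k m]; ring
    rw [Finset.sum_congr rfl e, ← Finset.mul_sum]
    ring
  have hMs : M * covMat n K K x x = covMat n J K w x := by
    rw [hMdef, Matrix.mul_assoc, Matrix.nonsing_inv_mul _ hSx, Matrix.mul_one]
  have hSk : ∑ k, M j k * ∑ i, x i k * V i
      = nn * (p * (M *ᵥ covVec n K x Y1) j + q * (M *ᵥ covVec n K x Y0) j
          - c * ∑ k, a k * covMat n J K w x j k) := by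
    rw [Finset.sum_congr rfl (fun k _ => by rw [hX k])]
    have e : ∀ k ∈ Finset.univ, M j k * (nn * (p * covVec n K x Y1 k + q * covVec n K x Y0 k
          - c * ∑ m, a m * covMat n K K x x k m))
        = (nn * p) * (M j k * covVec n K x Y1 k) + (nn * q) * (M j k * covVec n K x Y0 k)
          - (nn * c) * (M j k * ∑ m, a m * covMat n K K x x k m) := fun k _ => by ring
    rw [Finset.sum_congr rfl e, Finset.sum_sub_distrib, Finset.sum_add_distrib,
      ← Finset.mul_sum, ← Finset.mul_sum, ← Finset.mul_sum,
      swap_helper (fun k => M j k) (fun k m => covMat n K K x x k m) a]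
    have h1 : ∑ k, M j k * covVec n K x Y1 k = (M *ᵥ covVec n K x Y1) j := by
      simp [Matrix.mulVec, dotProduct]
    have h2 : ∑ k, M j k * covVec n K x Y0 k = (M *ᵥ covVec n K x Y0) j := by
      simp [Matrix.mulVec, dotProduct]
    have h3 : ∀ m ∈ Finset.univ, a m * ∑ k, M j k * covMat n K K x x k m
        = a m * covMat n J K w x j m := fun m _ => by
      rw [show ∑ k, M j k * covMat n K K x x k m = (M * covMat n K K x x) j m from
        Matrix.mul_apply.symm, hMs]
    rw [h1, h2, Finset.sum_congr rfl h3]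
    ring
  have hMv1 : M *ᵥ covVec n K x Y1
      = covMat n J K w x *ᵥ ((covMat n K K x x)⁻¹ *ᵥ covVec n K x Y1) := by
    rw [hMdef, ← Matrix.mulVec_mulVec]
  have hMv0 : M *ᵥ covVec n K x Y0
      = covMat n J K w x *ᵥ ((covMat n K K x x)⁻¹ *ᵥ covVec n K x Y0) := by
    rw [hMdef, ← Matrix.mulVec_mulVec]
  rw [hUVexp, hW, hSk, hMv1, hMv0]
  have hn1 : nn ≠ 0 := by
    rw [hnn]
    have : (2:ℝ) ≤ (n:ℝ) := by exact_mod_cast hn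
    linarith
  have hp1 : (n₁:ℝ) ≠ 0 := Nat.cast_ne_zero.mpr (by omega)
  have hq1 : (n₀:ℝ) ≠ 0 := Nat.cast_ne_zero.mpr (by omega)
  have hN : (n:ℝ) ≠ 0 := Nat.cast_ne_zero.mpr (by omega)
  have hcast : (n₁ : ℝ) + (n₀ : ℝ) = (n : ℝ) := by exact_mod_cast hsum
  have hone : (n₁ : ℝ) * (n₀ : ℝ) / ((n : ℝ) * nn) * c * nn = 1 := by
    rw [hcdef, hp, hq]
    field_simp
    linear_combination hcast
  linear_combination
    ((p * (covVec n J w Y1 j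
        - (covMat n J K w x *ᵥ ((covMat n K K x x)⁻¹ *ᵥ covVec n K x Y1)) j)
      + q * (covVec n J w Y0 j
        - (covMat n J K w x *ᵥ ((covMat n K K x x)⁻¹ *ᵥ covVec n K x Y0)) j))) * hone

/-- partial-covariance identity from Remark 2: with
`e_τ = (τ̂ − τ) − V_τx V_xx⁻¹ τ̂_x` and `e_w = τ̂_w − V_wx V_xx⁻¹ τ̂_x`,
`Cov(e_w, e_τ) = n₁⁻¹ S_{w,Y(1)∣x} + n₀⁻¹ S_{w,Y(0)∣x}`. -/
theorem statement13 (n n₁ n₀ J K : ℕ) (hn : 2 ≤ n) (hn₁ : 1 ≤ n₁) (hn₀ : 1 ≤ n₀)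
    (hsum : n₁ + n₀ = n) (Y1 Y0 : Fin n → ℝ) (w : Fin n → Fin J → ℝ)
    (x : Fin n → Fin K → ℝ) (hw : ∀ j, ∑ i, w i j = 0) (hx : ∀ k, ∑ i, x i k = 0)
    (hSx : IsUnit (covMat n K K x x).det) :
    ∀ j, crCov n n₁
        (fun s => tauHatVec n n₁ n₀ J w s j -
          ((Vmat n n₁ n₀ J K w x * (Vmat n n₁ n₀ K K x x)⁻¹) *ᵥ
            tauHatVec n n₁ n₀ K x s) j)
        (fun s => (tauHat n n₁ n₀ Y1 Y0 s - popMean n (fun i => Y1 i - Y0 i)) -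
          VvecTau n n₁ n₀ K x Y1 Y0 ⬝ᵥ
            ((Vmat n n₁ n₀ K K x x)⁻¹ *ᵥ tauHatVec n n₁ n₀ K x s))
      = (n₁ : ℝ)⁻¹ * (covVec n J w Y1 j -
            (covMat n J K w x *ᵥ ((covMat n K K x x)⁻¹ *ᵥ covVec n K x Y1)) j)
        + (n₀ : ℝ)⁻¹ * (covVec n J w Y0 j -
            (covMat n J K w x *ᵥ ((covMat n K K x x)⁻¹ *ᵥ covVec n K x Y0)) j) := by
  intro j
  have hle : n₁ ≤ n := by omega
  have hN : ((Omega n n₁).card : ℝ) ≠ 0 := by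
    rw [card_Omega]
    exact Nat.cast_ne_zero.mpr (Nat.choose_pos hle).ne'
  have hf : (fun s => tauHatVec n n₁ n₀ J w s j -
        ((Vmat n n₁ n₀ J K w x * (Vmat n n₁ n₀ K K x x)⁻¹) *ᵥ
          tauHatVec n n₁ n₀ K x s) j)
      = fun s => ∑ i, if i ∈ s then
          ((n₁:ℝ)⁻¹ + (n₀:ℝ)⁻¹) * (w i j -
            ∑ k, (Vmat n n₁ n₀ J K w x * (Vmat n n₁ n₀ K K x x)⁻¹) j k * x i k) else 0 := by
    funext s
    rw [tauHatVec_canon n n₁ n₀ J w hw s j,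
      mulVec_tauHatVec n n₁ n₀ J K _ x hx s j, ← Finset.sum_sub_distrib]
    exact Finset.sum_congr rfl fun i _ => by split_ifs <;> ring
  have hg : (fun s => (tauHat n n₁ n₀ Y1 Y0 s - popMean n (fun i => Y1 i - Y0 i)) -
        VvecTau n n₁ n₀ K x Y1 Y0 ⬝ᵥ
          ((Vmat n n₁ n₀ K K x x)⁻¹ *ᵥ tauHatVec n n₁ n₀ K x s))
      = fun s => ((-(n₀:ℝ)⁻¹ * ∑ i, Y0 i) - popMean n (fun i => Y1 i - Y0 i)) +
          ∑ i, if i ∈ s then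
            ((n₁:ℝ)⁻¹ * Y1 i + (n₀:ℝ)⁻¹ * Y0 i - ((n₁:ℝ)⁻¹ + (n₀:ℝ)⁻¹) *
              ∑ k, (VvecTau n n₁ n₀ K x Y1 Y0 ᵥ* (Vmat n n₁ n₀ K K x x)⁻¹) k * x i k) else 0 := by
    funext s
    rw [tauHat_canon n n₁ n₀ Y1 Y0 s, Matrix.dotProduct_mulVec,
      dot_tauHatVec n n₁ n₀ K _ x hx s]
    have hc : ∑ i, (if i ∈ s then (n₁:ℝ)⁻¹ * Y1 i + (n₀:ℝ)⁻¹ * Y0 i else 0)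
        - ∑ i, (if i ∈ s then ((n₁:ℝ)⁻¹ + (n₀:ℝ)⁻¹) *
            ∑ k, (VvecTau n n₁ n₀ K x Y1 Y0 ᵥ* (Vmat n n₁ n₀ K K x x)⁻¹) k * x i k else 0)
        = ∑ i, if i ∈ s then
            ((n₁:ℝ)⁻¹ * Y1 i + (n₀:ℝ)⁻¹ * Y0 i - ((n₁:ℝ)⁻¹ + (n₀:ℝ)⁻¹) *
              ∑ k, (VvecTau n n₁ n₀ K x Y1 Y0 ᵥ* (Vmat n n₁ n₀ K K x x)⁻¹) k * x i k) else 0 := by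
      rw [← Finset.sum_sub_distrib]
      exact Finset.sum_congr rfl fun i _ => by split_ifs <;> ring
    rw [← hc]
    ring
  rw [hf, hg, crCov_const_right n n₁ _ _ _ hN]
  have hU0 : ∑ i, (((n₁:ℝ)⁻¹ + (n₀:ℝ)⁻¹) * (w i j -
      ∑ k, (Vmat n n₁ n₀ J K w x * (Vmat n n₁ n₀ K K x x)⁻¹) j k * x i k)) = 0 := by
    have e : ∀ i ∈ Finset.univ, (((n₁:ℝ)⁻¹ + (n₀:ℝ)⁻¹) * (w i j -
        ∑ k, (Vmat n n₁ n₀ J K w x * (Vmat n n₁ n₀ K K x x)⁻¹) j k * x i k))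
        = ((n₁:ℝ)⁻¹ + (n₀:ℝ)⁻¹) * w i j - ((n₁:ℝ)⁻¹ + (n₀:ℝ)⁻¹) *
            ∑ k, (Vmat n n₁ n₀ J K w x * (Vmat n n₁ n₀ K K x x)⁻¹) j k * x i k :=
      fun i _ => by ring
    rw [Finset.sum_congr rfl e, Finset.sum_sub_distrib, ← Finset.mul_sum, hw j, mul_zero,
      ← Finset.mul_sum, zero_sub, neg_eq_zero, Finset.sum_comm]
    refine mul_eq_zero_of_right _ (Finset.sum_eq_zero fun k _ => ?_)
    rw [← Finset.mul_sum, hx k, mul_zero]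
  rw [key_cov n n₁ n₀ hn hn₁ hn₀ hsum _ _ hU0]
  exact final_alg n n₁ n₀ J K hn hn₁ hn₀ hsum Y1 Y0 w x hw hx hSx j _
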